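/- Let K > 0, γ > 0, 0 < ν < 1, θ(t) = K/(1+t)^ν, Θ(t) = ∫₀ᵗ θ(s) ds, and κ = γK/(1−ν). Then the limit as t → ∞ of the ratio ( ∫₀ᵗ e^{κ(1+s)^{1−ν}} (1+s)^{−(1+ν)} ds ) / ( (1/(κ(1−ν))) · e^{κ(1+t)^{1−ν}}/(1+t) ) equals 1; consequently there is a constant M' > 0 such that r(t) := e^{−γΘ(t)} ∫₀ᵗ e^{γΘ(s)} |θ'(s)| ds ≤ M'/(1+t) for all t ≥ 0. -/

import Mathlib

open Filter Topology intervalIntegral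

namespace Stmt14Aux

lemma hasDerivAt_one_add_rpow (p s : ℝ) (hs : (0:ℝ) < 1 + s) :
    HasDerivAt (fun x : ℝ => (1 + x) ^ p) (p * (1 + s) ^ (p - 1)) s := by
  have h1 : HasDerivAt (fun x : ℝ => 1 + x) 1 s := by
    simpa using (hasDerivAt_id s).const_add (1:ℝ)
  have h2 := (Real.hasDerivAt_rpow_const (p := p) (Or.inl hs.ne')).comp s h1
  simpa [Function.comp_def] using h2

lemma contOn_rpow (p : ℝ) : ContinuousOn (fun s : ℝ => (1 + s) ^ p) (Set.Ici (0:ℝ)) := by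
  intro x hx
  have hx0 : (0:ℝ) < 1 + x := by have : (0:ℝ) ≤ x := hx; linarith
  exact ((Real.continuousAt_rpow_const (1 + x) p (Or.inl hx0.ne')).comp
    ((continuous_const.add continuous_id).continuousAt)).continuousWithinAt

lemma contOn_E (κ : ℝ) (ν : ℝ) :
    ContinuousOn (fun s : ℝ => Real.exp (κ * (1 + s) ^ (1 - ν))) (Set.Ici (0:ℝ)) :=
  Real.continuous_exp.comp_continuousOn ((contOn_rpow (1 - ν)).const_smul κ)

lemma contOn_integrand (κ ν p : ℝ) :
    ContinuousOn (fun s : ℝ => Real.exp (κ * (1 + s) ^ (1 - ν)) * (1 + s) ^ p)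
      (Set.Ici (0:ℝ)) :=
  (contOn_E κ ν).mul (contOn_rpow p)

lemma uIcc_sub {a b : ℝ} (ha : 0 ≤ a) (hb : 0 ≤ b) : Set.uIcc a b ⊆ Set.Ici (0:ℝ) :=
  fun x hx => le_trans (le_inf ha hb) hx.1

lemma intInt (κ ν p : ℝ) {a b : ℝ} (ha : 0 ≤ a) (hb : 0 ≤ b) :
    IntervalIntegrable (fun s : ℝ => Real.exp (κ * (1 + s) ^ (1 - ν)) * (1 + s) ^ p)
      MeasureTheory.volume a b :=
  ((contOn_integrand κ ν p).mono (uIcc_sub ha hb)).intervalIntegrable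



lemma hasDerivAt_Phi (κ ν : ℝ) (hκ0 : 0 < κ) (hν1 : ν < 1) {s : ℝ} (hs : 0 ≤ s) :
    HasDerivAt (fun x : ℝ => (1 / (κ * (1 - ν))) * (Real.exp (κ * (1 + x) ^ (1 - ν)) / (1 + x)))
      (Real.exp (κ * (1 + s) ^ (1 - ν)) * (1 + s) ^ (-(1 + ν)) -
        (1 / (κ * (1 - ν))) * (Real.exp (κ * (1 + s) ^ (1 - ν)) * (1 + s) ^ (-2 : ℝ))) s := by
  have hu : (0:ℝ) < 1 + s := by linarith
  have h0 : HasDerivAt (fun x : ℝ => 1 + x) 1 s := by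
    simpa using (hasDerivAt_id s).const_add (1:ℝ)
  have h1 := hasDerivAt_one_add_rpow (1 - ν) s hu
  have h2 : HasDerivAt (fun x : ℝ => Real.exp (κ * (1 + x) ^ (1 - ν)))
      (Real.exp (κ * (1 + s) ^ (1 - ν)) * (κ * ((1 - ν) * (1 + s) ^ (1 - ν - 1)))) s :=
    (h1.const_mul κ).exp
  have h3 := (h2.div h0 hu.ne').const_mul (1 / (κ * (1 - ν)))
  refine h3.congr_deriv ?_
  symm
  set E := Real.exp (κ * (1 + s) ^ (1 - ν))
  have h1ν : (0:ℝ) < 1 - ν := by linarith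
  have hA : (1 + s) ^ (1 - ν - 1) = (1 + s) ^ (-(1+ν)) * (1 + s) := by
    rw [← Real.rpow_add_one hu.ne']; norm_num
  have hB : (1 + s) ^ (-2 : ℝ) = ((1 + s) ^ (2:ℕ) : ℝ)⁻¹ := by
    rw [← Real.rpow_natCast (1+s) 2, ← Real.rpow_neg hu.le]; norm_num
  rw [hA, hB]
  have h2ne : ((1 + s) ^ (2:ℕ) : ℝ) ≠ 0 := by positivity
  field_simp

lemma identity (κ ν : ℝ) (hκ0 : 0 < κ) (hν1 : ν < 1) {t : ℝ} (ht : 0 ≤ t) :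
    (∫ s in (0:ℝ)..t, Real.exp (κ * (1 + s) ^ (1 - ν)) * (1 + s) ^ (-(1 + ν)))
      = (1 / (κ * (1 - ν))) * (Real.exp (κ * (1 + t) ^ (1 - ν)) / (1 + t))
        - (1 / (κ * (1 - ν))) * Real.exp κ
        + (1 / (κ * (1 - ν))) *
          ∫ s in (0:ℝ)..t, Real.exp (κ * (1 + s) ^ (1 - ν)) * (1 + s) ^ (-2 : ℝ) := by
  set c := (1 / (κ * (1 - ν)))
  have hFTC := intervalIntegral.integral_eq_sub_of_hasDerivAt
    (f := fun x : ℝ => c * (Real.exp (κ * (1 + x) ^ (1 - ν)) / (1 + x)))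
    (f' := fun s : ℝ => Real.exp (κ * (1 + s) ^ (1 - ν)) * (1 + s) ^ (-(1 + ν)) -
        c * (Real.exp (κ * (1 + s) ^ (1 - ν)) * (1 + s) ^ (-2 : ℝ)))
    (a := 0) (b := t)
    (fun s hs => hasDerivAt_Phi κ ν hκ0 hν1 (by
      rcases hs with ⟨h1, _⟩
      simpa using le_trans (le_inf le_rfl ht) h1))
    (((intInt κ ν (-(1+ν)) le_rfl ht)).sub ((intInt κ ν (-2:ℝ) le_rfl ht).const_mul c))
  rw [intervalIntegral.integral_sub (intInt κ ν (-(1+ν)) le_rfl ht)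
      ((intInt κ ν (-2:ℝ) le_rfl ht).const_mul c),
    intervalIntegral.integral_const_mul] at hFTC
  have h0 : c * (Real.exp (κ * (1 + (0:ℝ)) ^ (1 - ν)) / (1 + 0)) = c * Real.exp κ := by
    norm_num
  rw [h0] at hFTC
  linarith [hFTC]



lemma integrand_nonneg (κ ν p : ℝ) {s : ℝ} (hs : 0 ≤ s) :
    0 ≤ Real.exp (κ * (1 + s) ^ (1 - ν)) * (1 + s) ^ p := by
  have : (0:ℝ) < 1 + s := by linarith
  positivity

lemma int_nonneg (κ ν p : ℝ) {a b : ℝ} (ha : 0 ≤ a) (hab : a ≤ b) :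
    0 ≤ ∫ s in a..b, Real.exp (κ * (1 + s) ^ (1 - ν)) * (1 + s) ^ p :=
  intervalIntegral.integral_nonneg hab
    (fun u hu => integrand_nonneg κ ν p (le_trans ha hu.1))

lemma int_split (κ ν p : ℝ) {a b : ℝ} (ha : 0 ≤ a) (hab : a ≤ b) :
    (∫ s in (0:ℝ)..b, Real.exp (κ * (1 + s) ^ (1 - ν)) * (1 + s) ^ p)
      = (∫ s in (0:ℝ)..a, Real.exp (κ * (1 + s) ^ (1 - ν)) * (1 + s) ^ p)
        + ∫ s in a..b, Real.exp (κ * (1 + s) ^ (1 - ν)) * (1 + s) ^ p :=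
  (intervalIntegral.integral_add_adjacent_intervals
    (intInt κ ν p le_rfl ha) (intInt κ ν p ha (le_trans ha hab))).symm

lemma J_mono (κ ν : ℝ) {a b : ℝ} (ha : 0 ≤ a) (hab : a ≤ b) :
    (∫ s in (0:ℝ)..a, Real.exp (κ * (1 + s) ^ (1 - ν)) * (1 + s) ^ (-2:ℝ))
      ≤ ∫ s in (0:ℝ)..b, Real.exp (κ * (1 + s) ^ (1 - ν)) * (1 + s) ^ (-2:ℝ) := by
  rw [int_split κ ν _ ha hab]
  have := int_nonneg κ ν (-2:ℝ) ha hab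
  linarith

lemma step3 (κ ν : ℝ) (hν1 : ν < 1) {t S : ℝ} (ht : 0 ≤ t) (hS : 0 ≤ S) :
    (∫ s in (0:ℝ)..t, Real.exp (κ * (1 + s) ^ (1 - ν)) * (1 + s) ^ (-2:ℝ))
      ≤ (∫ s in (0:ℝ)..S, Real.exp (κ * (1 + s) ^ (1 - ν)) * (1 + s) ^ (-2:ℝ))
        + (1 + S) ^ (ν - 1) *
          ∫ s in (0:ℝ)..t, Real.exp (κ * (1 + s) ^ (1 - ν)) * (1 + s) ^ (-(1+ν)) := by
  have hS1 : (0:ℝ) < 1 + S := by linarith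
  rcases le_total t S with h | h
  · have h1 := J_mono κ ν ht h
    have h2 : 0 ≤ (1 + S) ^ (ν - 1) *
        ∫ s in (0:ℝ)..t, Real.exp (κ * (1 + s) ^ (1 - ν)) * (1 + s) ^ (-(1+ν)) :=
      mul_nonneg (Real.rpow_nonneg hS1.le _) (int_nonneg κ ν _ le_rfl ht)
    linarith
  · rw [int_split κ ν (-2:ℝ) hS h]
    have hptw : ∀ s ∈ Set.Icc S t,
        Real.exp (κ * (1 + s) ^ (1 - ν)) * (1 + s) ^ (-2:ℝ)
          ≤ (1 + S) ^ (ν - 1) * (Real.exp (κ * (1 + s) ^ (1 - ν)) * (1 + s) ^ (-(1+ν))) := by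
      intro s hs
      have hs1 : (0:ℝ) < 1 + s := by have := le_trans hS hs.1; linarith
      have hsplit : (1 + s) ^ (-2:ℝ) = (1 + s) ^ (ν - 1) * (1 + s) ^ (-(1+ν)) := by
        rw [← Real.rpow_add hs1]; congr 1; ring
      have hmono : (1 + s) ^ (ν - 1) ≤ (1 + S) ^ (ν - 1) :=
        Real.rpow_le_rpow_of_nonpos hS1 (by linarith [hs.1]) (by linarith)
      rw [hsplit]
      calc Real.exp (κ * (1 + s) ^ (1 - ν)) * ((1 + s) ^ (ν - 1) * (1 + s) ^ (-(1+ν)))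
          = (1 + s) ^ (ν - 1) * (Real.exp (κ * (1 + s) ^ (1 - ν)) * (1 + s) ^ (-(1+ν))) := by
            ring
        _ ≤ (1 + S) ^ (ν - 1) * (Real.exp (κ * (1 + s) ^ (1 - ν)) * (1 + s) ^ (-(1+ν))) :=
            mul_le_mul_of_nonneg_right hmono (integrand_nonneg κ ν _ (le_trans hS hs.1))
    have hint := intervalIntegral.integral_mono_on h (intInt κ ν (-2:ℝ) hS (le_trans hS h))
      ((intInt κ ν (-(1+ν)) hS (le_trans hS h)).const_mul ((1 + S) ^ (ν - 1))) hptw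
    rw [intervalIntegral.integral_const_mul] at hint
    have htail : (∫ s in S..t, Real.exp (κ * (1 + s) ^ (1 - ν)) * (1 + s) ^ (-(1+ν)))
        ≤ ∫ s in (0:ℝ)..t, Real.exp (κ * (1 + s) ^ (1 - ν)) * (1 + s) ^ (-(1+ν)) := by
      rw [int_split κ ν (-(1+ν)) hS h]
      have := int_nonneg κ ν (-(1+ν)) le_rfl hS
      linarith
    have := mul_le_mul_of_nonneg_left htail (Real.rpow_nonneg hS1.le (ν - 1))
    linarith

lemma pow_div_fact_le_exp {x : ℝ} (hx : 0 ≤ x) (n : ℕ) :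
    x ^ n / n.factorial ≤ Real.exp x := by
  calc x ^ n / n.factorial ≤ ∑ i ∈ Finset.range (n+1), x ^ i / i.factorial := by
        refine Finset.single_le_sum (f := fun i => x ^ i / (i.factorial : ℝ)) ?_ ?_
        · intro i _; positivity
        · exact Finset.self_mem_range_succ n
    _ ≤ Real.exp x := Real.sum_le_exp_of_nonneg hx _

lemma sq_le_exp (κ ν : ℝ) (hκ0 : 0 < κ) (hν1 : ν < 1) :
    ∃ C > 0, ∀ t, 0 ≤ t → (1 + t) * (1 + t) ≤ C * Real.exp (κ * (1 + t) ^ (1 - ν)) := by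
  have h1ν : (0:ℝ) < 1 - ν := by linarith
  set m : ℕ := ⌈2 / (1 - ν)⌉₊ with hm
  have hm2 : 2 ≤ (1 - ν) * m := by
    have := Nat.le_ceil (2 / (1 - ν))
    calc (2:ℝ) = (1 - ν) * (2 / (1 - ν)) := by field_simp
      _ ≤ (1 - ν) * m := by
          exact mul_le_mul_of_nonneg_left this h1ν.le
  refine ⟨m.factorial / κ ^ m, by positivity, fun t ht => ?_⟩
  have hT1 : (1:ℝ) ≤ 1 + t := by linarith
  have hT0 : (0:ℝ) < 1 + t := by linarith
  have e1 : (κ * (1 + t) ^ (1 - ν)) ^ m / m.factorial ≤ Real.exp (κ * (1 + t) ^ (1 - ν)) :=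
    pow_div_fact_le_exp (by positivity) m
  have e2 : (κ * (1 + t) ^ (1 - ν)) ^ m = κ ^ m * (1 + t) ^ ((1 - ν) * m) := by
    rw [mul_pow, Real.rpow_mul hT0.le, Real.rpow_natCast]
  have e3 : (1 + t) * (1 + t) ≤ (1 + t) ^ ((1 - ν) * m) := by
    calc (1 + t) * (1 + t) = (1 + t) ^ (2:ℝ) := by
          rw [show (2:ℝ) = ((2:ℕ):ℝ) by norm_num, Real.rpow_natCast]; ring
      _ ≤ (1 + t) ^ ((1 - ν) * m) := Real.rpow_le_rpow_of_exponent_le hT1 hm2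
  have hκm : (0:ℝ) < κ ^ m := by positivity
  rw [e2] at e1
  calc (1 + t) * (1 + t) ≤ (1 + t) ^ ((1 - ν) * m) := e3
    _ ≤ (m.factorial / κ ^ m) * Real.exp (κ * (1 + t) ^ (1 - ν)) := by
        rw [div_le_iff₀ (by positivity : (0:ℝ) < (m.factorial:ℝ))] at e1
        rw [div_mul_eq_mul_div, le_div_iff₀ hκm]
        nlinarith

lemma choose_S (ν : ℝ) (hν1 : ν < 1) {δ : ℝ} (hδ : 0 < δ) :
    ∃ S, 0 ≤ S ∧ (1 + S) ^ (ν - 1) ≤ δ := by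
  have h1ν : (0:ℝ) < 1 - ν := by linarith
  set B : ℝ := max 1 (1/δ) with hB
  have hB1 : (1:ℝ) ≤ B := le_max_left _ _
  have hB0 : (0:ℝ) ≤ B := by linarith
  refine ⟨B ^ (1 - ν)⁻¹, Real.rpow_nonneg hB0 _, ?_⟩
  set S := B ^ (1 - ν)⁻¹ with hS
  have hS0 : 0 ≤ S := Real.rpow_nonneg hB0 _
  have hSB : S ^ (1 - ν) = B := Real.rpow_inv_rpow hB0 h1ν.ne'
  have h1 : B ≤ (1 + S) ^ (1 - ν) := by
    rw [← hSB]
    exact Real.rpow_le_rpow hS0 (by linarith) h1ν.le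
  have h2 : 1/δ ≤ (1 + S) ^ (1 - ν) := le_trans (le_max_right _ _) h1
  have hpos : (0:ℝ) < (1 + S) ^ (1 - ν) := by positivity
  rw [show ν - 1 = -(1 - ν) by ring, Real.rpow_neg (by linarith : (0:ℝ) ≤ 1 + S)]
  calc ((1 + S) ^ (1 - ν))⁻¹ ≤ (1/δ)⁻¹ :=
        inv_anti₀ (by positivity) h2
    _ = δ := by rw [one_div, inv_inv]

lemma abs_deriv_theta (K ν : ℝ) (hK : 0 < K) (hν0 : 0 < ν) {s : ℝ} (hs : 0 ≤ s) :
    |deriv (fun u : ℝ => K / (1 + u) ^ ν) s| = K * ν * (1 + s) ^ (-(1 + ν)) := by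
  have hu : (0:ℝ) < 1 + s := by linarith
  have hg : HasDerivAt (fun u : ℝ => K * (1 + u) ^ (-ν)) (K * (-ν * (1 + s) ^ (-ν - 1))) s :=
    (hasDerivAt_one_add_rpow (-ν) s hu).const_mul K
  have heq : (fun u : ℝ => K / (1 + u) ^ ν) =ᶠ[𝓝 s] (fun u : ℝ => K * (1 + u) ^ (-ν)) := by
    filter_upwards [eventually_gt_nhds (show (-1:ℝ) < s by linarith)] with u hu'
    have h0 : (0:ℝ) ≤ 1 + u := by linarith
    rw [Real.rpow_neg h0, div_eq_mul_inv]
  have hd : HasDerivAt (fun u : ℝ => K / (1 + u) ^ ν) (K * (-ν * (1 + s) ^ (-ν - 1))) s :=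
    hg.congr_of_eventuallyEq heq
  rw [hd.deriv]
  have h1 : K * (-ν * (1 + s) ^ (-ν - 1)) = -(K * ν * (1 + s) ^ (-(1 + ν))) := by
    rw [show -ν - 1 = -(1 + ν) by ring]; ring
  rw [h1, abs_neg, abs_of_nonneg (by positivity)]

lemma Theta_val (K ν : ℝ) (hν0 : 0 < ν) (hν1 : ν < 1) {s : ℝ} (hs : 0 ≤ s) :
    (∫ τ in (0:ℝ)..s, K / (1 + τ) ^ ν) = K / (1 - ν) * ((1 + s) ^ (1 - ν) - 1) := by
  have h1ν : (0:ℝ) < 1 - ν := by linarith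
  have hFTC := intervalIntegral.integral_eq_sub_of_hasDerivAt
    (f := fun τ : ℝ => K / (1 - ν) * (1 + τ) ^ (1 - ν))
    (f' := fun τ : ℝ => K / (1 + τ) ^ ν) (a := 0) (b := s)
    (fun τ hτ => by
      have hτ0 : (0:ℝ) ≤ τ := by
        rcases hτ with ⟨h1, _⟩
        simpa using le_trans (le_inf le_rfl hs) h1
      have hu : (0:ℝ) < 1 + τ := by linarith
      have h := (hasDerivAt_one_add_rpow (1 - ν) τ hu).const_mul (K / (1 - ν))
      refine h.congr_deriv ?_
      symm
      rw [show (1 - ν - 1) = -ν by ring, Real.rpow_neg hu.le]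
      field_simp)
    (by
      apply ContinuousOn.intervalIntegrable
      apply ContinuousOn.mono _ (uIcc_sub le_rfl hs)
      apply ContinuousOn.div continuousOn_const (contOn_rpow ν)
      intro x hx
      have : (0:ℝ) < 1 + x := by have : (0:ℝ) ≤ x := hx; linarith
      positivity)
  rw [hFTC]
  norm_num [Real.one_rpow]
  ring

end Stmt14Aux

open Stmt14Aux in
theorem stmt14 (K γ ν : ℝ) (hK : 0 < K) (hγ : 0 < γ) (hν0 : 0 < ν) (hν1 : ν < 1)
    (θ : ℝ → ℝ) (hθ : ∀ t, θ t = K / (1 + t) ^ ν)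
    (κ : ℝ) (hκ : κ = γ * K / (1 - ν)) :
    Tendsto (fun t =>
        (∫ s in (0:ℝ)..t, Real.exp (κ * (1 + s) ^ (1 - ν)) * (1 + s) ^ (-(1 + ν))) /
          ((1 / (κ * (1 - ν))) * (Real.exp (κ * (1 + t) ^ (1 - ν)) / (1 + t))))
      atTop (𝓝 1) ∧
    ∃ M' > 0, ∀ t, 0 ≤ t →
      Real.exp (-(γ * ∫ s in (0:ℝ)..t, θ s)) *
          ∫ s in (0:ℝ)..t, Real.exp (γ * ∫ τ in (0:ℝ)..s, θ τ) * |deriv θ s|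
        ≤ M' / (1 + t) := by
  have h1ν : (0:ℝ) < 1 - ν := by linarith
  have hκ0 : 0 < κ := by rw [hκ]; positivity
  set c : ℝ := 1 / (κ * (1 - ν)) with hc
  have hc0 : 0 < c := by positivity
  set F : ℝ → ℝ := fun u => ∫ s in (0:ℝ)..u,
      Real.exp (κ * (1 + s) ^ (1 - ν)) * (1 + s) ^ (-(1 + ν)) with hF
  set J : ℝ → ℝ := fun u => ∫ s in (0:ℝ)..u,
      Real.exp (κ * (1 + s) ^ (1 - ν)) * (1 + s) ^ (-2 : ℝ) with hJ
  set G : ℝ → ℝ := fun u => Real.exp (κ * (1 + u) ^ (1 - ν)) / (1 + u) with hG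
  obtain ⟨C, hC0, hCbd⟩ := sq_le_exp κ ν hκ0 hν1
  have hGpos : ∀ t : ℝ, 0 ≤ t → 0 < G t := by
    intro t ht
    have : (0:ℝ) < 1 + t := by linarith
    rw [hG]; positivity
  have hGlow : ∀ t : ℝ, 0 ≤ t → (1 + t) / C ≤ G t := by
    intro t ht
    have hT0 : (0:ℝ) < 1 + t := by linarith
    rw [hG]
    rw [div_le_div_iff₀ hC0 hT0]
    calc (1 + t) * (1 + t) ≤ C * Real.exp (κ * (1 + t) ^ (1 - ν)) := hCbd t ht
      _ = Real.exp (κ * (1 + t) ^ (1 - ν)) * C := by ring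
  have hid : ∀ t : ℝ, 0 ≤ t → F t = c * G t - c * Real.exp κ + c * J t := by
    intro t ht
    exact identity κ ν hκ0 hν1 ht
  have hFnn : ∀ t : ℝ, 0 ≤ t → 0 ≤ F t := fun t ht => int_nonneg κ ν _ le_rfl ht
  have hJnn : ∀ t : ℝ, 0 ≤ t → 0 ≤ J t := fun t ht => int_nonneg κ ν _ le_rfl ht
  have hstep3 : ∀ t S : ℝ, 0 ≤ t → 0 ≤ S →
      J t ≤ J S + (1 + S) ^ (ν - 1) * F t :=
    fun t S ht hS => step3 κ ν hν1 ht hS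
  obtain ⟨S₀, hS₀0, hS₀⟩ := choose_S ν hν1 (show (0:ℝ) < 1/(2*c) by positivity)
  clear_value F J G
  clear_value c
  have hS₀half : c * (1 + S₀) ^ (ν - 1) ≤ 1/2 := by
    have h := mul_le_mul_of_nonneg_left hS₀ hc0.le
    have h2 : c * (1/(2*c)) = 1/2 := by
      field_simp
    linarith
  have hFb : ∀ t : ℝ, 0 ≤ t → F t ≤ 2*c*(G t) + 2*c*(J S₀) := by
    intro t ht
    have h3 := hstep3 t S₀ ht hS₀0
    have hrnn : (0:ℝ) ≤ (1 + S₀) ^ (ν - 1) := Real.rpow_nonneg (by linarith) _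
    have h4 : c * J t ≤ c * (J S₀) + (c * (1 + S₀) ^ (ν - 1)) * F t := by
      have h41 := mul_le_mul_of_nonneg_left h3 hc0.le
      have h42 : c * (J S₀ + (1 + S₀) ^ (ν - 1) * F t)
          = c * (J S₀) + (c * (1 + S₀) ^ (ν - 1)) * F t := by ring
      linarith
    have h5 : (c * (1 + S₀) ^ (ν - 1)) * F t ≤ (1/2) * F t :=
      mul_le_mul_of_nonneg_right hS₀half (hFnn t ht)
    have hid' := hid t ht
    have hGt := hGpos t ht
    have hce : 0 < c * Real.exp κ := mul_pos hc0 (Real.exp_pos κ)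
    linarith
  constructor
  · -- Part 1
    rw [Metric.tendsto_nhds]
    intro ε hε
    obtain ⟨S, hS0, hSd⟩ := choose_S ν hν1 (show (0:ℝ) < ε/(2*(2*c+1)) by positivity)
    set D : ℝ := J S + 2*c*(J S₀) with hD
    have hDnn : 0 ≤ D := by
      have h1 := hJnn S hS0
      have h2 := hJnn S₀ hS₀0
      positivity
    set A : ℝ := C * (D + Real.exp κ) with hA
    have hA0 : 0 < A := by positivity
    filter_upwards [eventually_ge_atTop (max 0 (4*A/ε))] with t htt
    have ht : (0:ℝ) ≤ t := le_trans (le_max_left _ _) htt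
    have hT0 : (0:ℝ) < 1 + t := by linarith
    have hGt := hGpos t ht
    have hGl := hGlow t ht
    have hAt : A / (1 + t) < ε / 4 := by
      have h1 : 4*A/ε < 1 + t := by
        have := le_trans (le_max_right _ _) htt
        linarith
      rw [div_lt_iff₀ hT0]
      rw [div_lt_iff₀ (by positivity : (0:ℝ) < ε)] at h1
      linarith
    have hshow : dist ((F t) / (c * G t)) 1 < ε → dist
        ((∫ s in (0:ℝ)..t, Real.exp (κ * (1 + s) ^ (1 - ν)) * (1 + s) ^ (-(1 + ν))) /
          (c * (Real.exp (κ * (1 + t) ^ (1 - ν)) / (1 + t)))) 1 < ε := by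
      rw [hF, hG]
      exact id
    apply hshow
    have hrep : F t / (c * G t) - 1 = (J t - Real.exp κ) * (G t)⁻¹ := by
      rw [hid t ht]
      field_simp
      ring
    have hGinv : (G t)⁻¹ ≤ C / (1 + t) := by
      rw [← one_div]
      calc 1 / G t ≤ 1 / ((1 + t)/C) :=
            one_div_le_one_div_of_le (by positivity) hGl
        _ = C / (1 + t) := by field_simp
    have hGinv0 : (0:ℝ) < (G t)⁻¹ := by positivity
    have hlow : -(ε/4) < F t / (c * G t) - 1 := by
      rw [hrep]
      have h1 : -(Real.exp κ) * (G t)⁻¹ ≤ (J t - Real.exp κ) * (G t)⁻¹ := by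
        apply mul_le_mul_of_nonneg_right _ hGinv0.le
        have := hJnn t ht
        linarith
      have h2 : Real.exp κ * (G t)⁻¹ ≤ Real.exp κ * (C / (1 + t)) :=
        mul_le_mul_of_nonneg_left hGinv (Real.exp_pos κ).le
      have h3 : Real.exp κ * (C / (1 + t)) ≤ A / (1 + t) := by
        rw [hA, show Real.exp κ * (C / (1 + t)) = C * Real.exp κ / (1 + t) by ring]
        apply (div_le_div_iff_of_pos_right hT0).mpr
        have : C * (D + Real.exp κ) = C * D + C * Real.exp κ := by ring
        have := mul_nonneg hC0.le hDnn
        linarith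
      linarith
    have hub : F t / (c * G t) - 1 < ε/4 + ε/2 := by
      rw [hrep]
      have hrnnS : (0:ℝ) ≤ (1 + S) ^ (ν - 1) := Real.rpow_nonneg (by linarith) _
      have hrS1 : (1 + S) ^ (ν - 1) ≤ 1 :=
        Real.rpow_le_one_of_one_le_of_nonpos (by linarith) (by linarith)
      have h3 := hstep3 t S ht hS0
      have hJb : J t ≤ D + (2*c*(1 + S) ^ (ν - 1)) * G t := by
        have hFbt := hFb t ht
        have h5 : (1 + S) ^ (ν - 1) * F t ≤ (1 + S) ^ (ν - 1) * (2*c*(G t) + 2*c*(J S₀)) :=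
          mul_le_mul_of_nonneg_left hFbt hrnnS
        have hJS₀ := hJnn S₀ hS₀0
        have h51 : (1 + S) ^ (ν - 1) * (2*c*(G t) + 2*c*(J S₀))
            = (2*c*(1 + S) ^ (ν - 1)) * G t + (1 + S) ^ (ν - 1) * (2*c*(J S₀)) := by
          ring
        have h52 : (1 + S) ^ (ν - 1) * (2*c*(J S₀)) ≤ 2*c*(J S₀) :=
          mul_le_of_le_one_left (by positivity) hrS1
        linarith [hD]
      have h6 : (J t - Real.exp κ) * (G t)⁻¹ ≤ J t * (G t)⁻¹ := by
        apply mul_le_mul_of_nonneg_right _ hGinv0.le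
        have := Real.exp_pos κ
        linarith
      have h7 : J t * (G t)⁻¹ ≤ (D + (2*c*(1 + S) ^ (ν - 1)) * G t) * (G t)⁻¹ :=
        mul_le_mul_of_nonneg_right hJb hGinv0.le
      have h8 : (D + (2*c*(1 + S) ^ (ν - 1)) * G t) * (G t)⁻¹
          = D * (G t)⁻¹ + 2*c*(1 + S) ^ (ν - 1) := by
        field_simp
      have h9 : D * (G t)⁻¹ ≤ D * (C / (1 + t)) := mul_le_mul_of_nonneg_left hGinv hDnn
      have h10 : D * (C / (1 + t)) ≤ A / (1 + t) := by
        rw [hA, show D * (C / (1 + t)) = C * D / (1 + t) by ring]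
        apply (div_le_div_iff_of_pos_right hT0).mpr
        have he1 : C * (D + Real.exp κ) = C * D + C * Real.exp κ := by ring
        have he2 := mul_pos hC0 (Real.exp_pos κ)
        linarith
      have h11 : 2*c*(1 + S) ^ (ν - 1) ≤ ε/2 := by
        have h12 := mul_le_mul_of_nonneg_left hSd (by positivity : (0:ℝ) ≤ 2*c)
        have h13 : 2*c*(ε/(2*(2*c+1))) ≤ ε/2 := by
          rw [show 2*c*(ε/(2*(2*c+1))) = (2*c*ε)/(2*(2*c+1)) by ring,
            div_le_div_iff₀ (by positivity : (0:ℝ) < 2*(2*c+1)) (by norm_num : (0:ℝ) < 2)]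
          linarith only [hε.le, mul_pos hc0 hε]
        linarith only [h12, h13]
      linarith only [h6, h7, h8, h9, h10, h11, hAt]
    rw [Real.dist_eq, abs_lt]
    exact ⟨by linarith only [hlow, hε], by linarith only [hub, hε]⟩
  · -- Part 2
    have hJS₀nn := hJnn S₀ hS₀0
    have hM0 : (0:ℝ) < 2*K*ν*c*(1 + (J S₀)*C) := by
      have h1 : (0:ℝ) < 1 + (J S₀)*C := by
        have := mul_nonneg hJS₀nn hC0.le
        linarith
      have h2 : (0:ℝ) < 2*K*ν*c := by positivity
      exact mul_pos h2 h1
    refine ⟨2*K*ν*c*(1 + (J S₀)*C), hM0, fun t ht => ?_⟩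
    have hT0 : (0:ℝ) < 1 + t := by linarith
    have hθfun : θ = fun u : ℝ => K / (1 + u) ^ ν := funext hθ
    subst hθfun
    have hΘt : (∫ s in (0:ℝ)..t, K / (1 + s) ^ ν) = K / (1 - ν) * ((1 + t) ^ (1 - ν) - 1) :=
      Theta_val K ν hν0 hν1 ht
    have hcongr : Set.EqOn
        (fun s : ℝ => Real.exp (γ * ∫ τ in (0:ℝ)..s, K / (1 + τ) ^ ν) *
          |deriv (fun u : ℝ => K / (1 + u) ^ ν) s|)
        (fun s : ℝ => (K * ν * Real.exp (-κ)) *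
          (Real.exp (κ * (1 + s) ^ (1 - ν)) * (1 + s) ^ (-(1 + ν))))
        (Set.uIcc 0 t) := by
      intro s hs
      have hs0 : (0:ℝ) ≤ s := uIcc_sub le_rfl ht hs
      have h1 : γ * (K / (1 - ν) * ((1 + s) ^ (1 - ν) - 1))
          = κ * (1 + s) ^ (1 - ν) + (-κ) := by rw [hκ]; ring
      simp only [Theta_val K ν hν0 hν1 hs0, abs_deriv_theta K ν hK hν0 hs0, h1,
        Real.exp_add]
      ring
    have hint : (∫ s in (0:ℝ)..t, Real.exp (γ * ∫ τ in (0:ℝ)..s, K / (1 + τ) ^ ν) *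
          |deriv (fun u : ℝ => K / (1 + u) ^ ν) s|)
        = (K * ν * Real.exp (-κ)) * F t := by
      rw [intervalIntegral.integral_congr hcongr, intervalIntegral.integral_const_mul]
      simp only [hF]
    rw [hint, hΘt]
    set X : ℝ := Real.exp (κ * (1 + t) ^ (1 - ν)) with hX
    have hXpos : (0:ℝ) < X := Real.exp_pos _
    have hexp : Real.exp (-(γ * (K / (1 - ν) * ((1 + t) ^ (1 - ν) - 1))))
        = Real.exp κ * X⁻¹ := by
      rw [hX, ← Real.exp_neg, ← Real.exp_add]
      congr 1
      rw [hκ]; ring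
    rw [hexp]
    have hCt : (1 + t) * (1 + t) ≤ C * X := by rw [hX]; exact hCbd t ht
    have hX1 : (1 + t) / C ≤ X := by
      rw [div_le_iff₀ hC0]
      nlinarith [mul_nonneg hT0.le ht]
    have hinv : X⁻¹ ≤ C * (1 + t)⁻¹ := by
      rw [← one_div, ← one_div]
      calc 1 / X ≤ 1 / ((1 + t)/C) := one_div_le_one_div_of_le (by positivity) hX1
        _ = C * (1/(1 + t)) := by field_simp
    have hGX : G t * X⁻¹ = (1 + t)⁻¹ := by
      simp only [hG, hX]
      field_simp
    have hchain : F t * X⁻¹ ≤ 2*c*(1 + t)⁻¹ + 2*c*(J S₀)*(C*(1 + t)⁻¹) := by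
      have h1 : F t * X⁻¹ ≤ (2*c*(G t) + 2*c*(J S₀)) * X⁻¹ :=
        mul_le_mul_of_nonneg_right (hFb t ht) (inv_nonneg.mpr hXpos.le)
      have h2 : (2*c*(G t) + 2*c*(J S₀)) * X⁻¹
          = 2*c*(G t * X⁻¹) + 2*c*(J S₀)*X⁻¹ := by ring
      have h3 : 2*c*(J S₀)*X⁻¹ ≤ 2*c*(J S₀)*(C*(1 + t)⁻¹) := by
        apply mul_le_mul_of_nonneg_left hinv
        have h31 : (0:ℝ) < 2*c := by positivity
        exact mul_nonneg h31.le hJS₀nn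
      rw [h2, hGX] at h1
      linarith
    have hmain := mul_le_mul_of_nonneg_left hchain
      (by positivity : (0:ℝ) ≤ K * ν)
    calc Real.exp κ * X⁻¹ * (K * ν * Real.exp (-κ) * F t)
        = (Real.exp κ * Real.exp (-κ)) * (K * ν * (F t * X⁻¹)) := by ring
      _ = K * ν * (F t * X⁻¹) := by
          rw [← Real.exp_add]; simp
      _ ≤ K * ν * (2*c*(1 + t)⁻¹ + 2*c*(J S₀)*(C*(1 + t)⁻¹)) := hmain
      _ = 2*K*ν*c*(1 + (J S₀)*C) / (1 + t) := by
          rw [div_eq_mul_inv]; ring
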